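/- For a one-feature regression model with E[f̂(x_1)] = 0 and performance metric G(y_i; x_i) = −(y_i − f̂(x_i))², the individual XPER value of the unique feature satisfies φ_{i,1} = 2ε̂_i·φ_{i,1}^{SHAP} + (φ_{i,1}^{SHAP})² + Var(f̂(x_1)), where ε̂_i = y_i − f̂(x_{i,1}) and φ_{i,1}^{SHAP} = f̂(x_{i,1}). -/

import Mathlib

open MeasureTheory

noncomputable def cov {Ω : Type*} [MeasurableSpace Ω] (μ : Measure Ω) (f g : Ω → ℝ) : ℝ :=
  ∫ ω, (f ω - ∫ ω', f ω' ∂μ) * (g ω - ∫ ω', g ω' ∂μ) ∂μ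

noncomputable def var {Ω : Type*} [MeasurableSpace Ω] (μ : Measure Ω) (f : Ω → ℝ) : ℝ :=
  cov μ f f

/-- One-feature regression with `E[f̂(x₁)] = 0` and performance metric
`G(y_i;x_i) = −(y_i − f̂(x_i))²`: the individual XPER value of the unique feature,
`φ_{i,1} = G(y_i;x_{i,1}) − φ_{i,0}` with `φ_{i,0} = E_{x₁}[−(y_i − f̂(x₁))²]`, satisfies
`φ_{i,1} = 2 ε̂_i φ_{i,1}^{SHAP} + (φ_{i,1}^{SHAP})² + Var(f̂(x₁))`, where
`ε̂_i = y_i − f̂(x_{i,1})` and `φ_{i,1}^{SHAP} = f̂(x_{i,1})`. -/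
theorem indXPER_one_feature_shap_relation {Ω : Type*} [MeasurableSpace Ω] (μ : Measure Ω)
    [IsProbabilityMeasure μ] (x1 : Ω → ℝ) (fhat : ℝ → ℝ)
    (hf : MemLp (fun ω => fhat (x1 ω)) 2 μ)
    (hmean : (∫ ω, fhat (x1 ω) ∂μ) = 0) (yi xi1 : ℝ) :
    -(yi - fhat xi1) ^ 2 - (∫ ω, -(yi - fhat (x1 ω)) ^ 2 ∂μ)
      = 2 * (yi - fhat xi1) * fhat xi1 + (fhat xi1) ^ 2
        + var μ (fun ω => fhat (x1 ω)) := by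
  have h1 : Integrable (fun ω => fhat (x1 ω)) μ :=
    hf.integrable (by norm_num)
  have h2 : Integrable (fun ω => fhat (x1 ω) ^ 2) μ := by
    have := hf.integrable_sq
    simpa [sq] using this
  have hvar : var μ (fun ω => fhat (x1 ω)) = ∫ ω, fhat (x1 ω) ^ 2 ∂μ := by
    unfold var cov
    simp [hmean, sq]
  have hint : (∫ ω, -(yi - fhat (x1 ω)) ^ 2 ∂μ)
      = -yi ^ 2 + 2 * yi * (∫ ω, fhat (x1 ω) ∂μ) - ∫ ω, fhat (x1 ω) ^ 2 ∂μ := by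
    have heq : (fun ω => -(yi - fhat (x1 ω)) ^ 2)
        = fun ω => (-yi ^ 2) + (2 * yi) * fhat (x1 ω) - fhat (x1 ω) ^ 2 := by
      funext ω; ring
    rw [heq, integral_sub (by exact (integrable_const _).add (h1.const_mul _)) h2,
      integral_add (integrable_const _) (h1.const_mul _), integral_const,
      integral_const_mul]
    simp
  rw [hvar, hint, hmean]
  ring
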